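/- Let T ⊆ ℝ²≥0 be the triangle with vertices (4,0), (10,0), (7,3) and 𝔗 = ⋃_{i∈ℕ} (i·T) ∩ ℕ², with n₁ = (7,3), n₂ = (4,0). Then 𝔗 satisfies the combinatorial Cohen-Macaulay condition: for every a ∈ C \ 𝔗, where C = {q₁(7,3) + q₂(4,0) : q₁, q₂ ∈ ℚ≥0} ∩ ℕ², at least one of a + n₁, a + n₂ is not in 𝔗. -/

import Mathlib

open scoped Pointwise

def toQ (p : ℤ × ℤ) : ℚ × ℚ := ((p.1 : ℚ), (p.2 : ℚ))
def toR (p : ℤ × ℤ) : ℝ × ℝ := ((p.1 : ℝ), (p.2 : ℝ))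
def isNat (p : ℤ × ℤ) : Prop := 0 ≤ p.1 ∧ 0 ≤ p.2
def inCone (n₁ n₂ a : ℤ × ℤ) : Prop :=
  ∃ q₁ q₂ : ℚ, 0 ≤ q₁ ∧ 0 ≤ q₂ ∧ toQ a = q₁ • toQ n₁ + q₂ • toQ n₂
def onRay (n a : ℤ × ℤ) : Prop := ∃ q : ℚ, 0 ≤ q ∧ toQ a = q • toQ n


def tri3 : Set (ℝ × ℝ) :=
  convexHull ℝ {((4 : ℝ), (0 : ℝ)), ((10 : ℝ), (0 : ℝ)), ((7 : ℝ), (3 : ℝ))}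

def triSem3 : Set (ℤ × ℤ) :=
  {a : ℤ × ℤ | a = 0 ∨ ∃ i : ℕ, toR a ∈ (i : ℝ) • tri3}

lemma tri3_char (p : ℝ × ℝ) :
    p ∈ tri3 ↔ 0 ≤ p.2 ∧ 4 + p.2 ≤ p.1 ∧ p.1 ≤ 10 - p.2 := by
  constructor
  · intro hp
    have hmin : tri3 ⊆ {q : ℝ × ℝ | 0 ≤ q.2 ∧ 4 + q.2 ≤ q.1 ∧ q.1 ≤ 10 - q.2} := by
      apply convexHull_min
      · rintro q (rfl | rfl | rfl) <;> norm_num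
      · intro u hu v hv a b ha hb hab
        simp only [Set.mem_setOf_eq, Prod.fst_add, Prod.snd_add, Prod.smul_fst,
          Prod.smul_snd, smul_eq_mul] at *
        refine ⟨by nlinarith [mul_nonneg ha hu.1, mul_nonneg hb hv.1], by nlinarith, by nlinarith⟩
    exact hmin hp
  · rintro ⟨h0, h1, h2⟩
    have := Finset.centerMass_mem_convexHull (s := {((4 : ℝ), (0 : ℝ)), ((10 : ℝ), (0 : ℝ)), ((7 : ℝ), (3 : ℝ))}) (Finset.univ : Finset (Fin 3))
      (w := ![(10 - p.1 - p.2)/6, (p.1 - 4 - p.2)/6, p.2/3])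
      (z := ![((4 : ℝ), (0 : ℝ)), ((10 : ℝ), (0 : ℝ)), ((7 : ℝ), (3 : ℝ))])
      (by intro i _; fin_cases i <;> simp <;> linarith)
      (by simp [Fin.sum_univ_three]; ring_nf; linarith)
      (by intro i _; fin_cases i <;> simp [Set.mem_insert_iff])
    rw [Finset.centerMass_eq_of_sum_1] at this
    · convert this using 1
      · rfl
      simp [Fin.sum_univ_three, Prod.ext_iff, Prod.smul_fst, Prod.smul_snd]
      ring
    · simp [Fin.sum_univ_three]; ring

lemma scaled_char (k : ℕ) (hk : 0 < k) (p : ℝ × ℝ) :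
    p ∈ (k : ℝ) • tri3 ↔ 0 ≤ p.2 ∧ 4 * k + p.2 ≤ p.1 ∧ p.1 ≤ 10 * k - p.2 := by
  have hk' : (0 : ℝ) < k := by exact_mod_cast hk
  constructor
  · rintro ⟨q, hq, rfl⟩
    rw [tri3_char] at hq
    simp only [Prod.smul_fst, Prod.smul_snd, smul_eq_mul]
    refine ⟨by nlinarith [hq.1], by nlinarith [hq.2.1], by nlinarith [hq.2.2]⟩
  · rintro ⟨h0, h1, h2⟩
    refine ⟨(p.1 / k, p.2 / k), ?_, ?_⟩
    · rw [tri3_char]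
      simp only
      refine ⟨by positivity, ?_, ?_⟩
      · rw [show (4:ℝ) + p.2 / k = (4*k + p.2)/k by field_simp, div_le_div_iff₀ hk' hk']
        nlinarith
      · rw [show (10:ℝ) - p.2 / k = (10*k - p.2)/k by field_simp, div_le_div_iff₀ hk' hk']
        nlinarith
    · ext <;> simp [Prod.smul_fst, Prod.smul_snd] <;> field_simp

/-- Instance of Corollary "triangulos_C-M": the semigroup of the triangle
`{(4,0),(10,0),(7,3)}` satisfies the combinatorial Cohen-Macaulay condition. -/
theorem stmt15 :
    ∀ a : ℤ × ℤ, isNat a → inCone ((7 : ℤ), (3 : ℤ)) ((4 : ℤ), (0 : ℤ)) a →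
      a ∉ triSem3 →
      (a + ((7 : ℤ), (3 : ℤ)) ∉ triSem3 ∨ a + ((4 : ℤ), (0 : ℤ)) ∉ triSem3) := by
  intro a hnat _ hns
  left
  intro hmem
  apply hns
  have hy : (0 : ℝ) ≤ (a.2 : ℝ) := by exact_mod_cast hnat.2
  rcases hmem with h0 | ⟨k, hk⟩
  · exfalso
    have h2 := congrArg Prod.snd h0
    simp [Prod.snd_add] at h2
    have := hnat.2
    omega
  · have htoR : toR (a + ((7 : ℤ), (3 : ℤ))) = ((a.1 : ℝ) + 7, (a.2 : ℝ) + 3) := by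
      simp only [toR, Prod.fst_add, Prod.snd_add]; push_cast; rfl
    rw [htoR] at hk
    rcases Nat.eq_zero_or_pos k with rfl | hkpos
    · exfalso
      rcases hk with ⟨q, _, hq⟩
      have : (0 : ℝ) = (a.2 : ℝ) + 3 := by
        have := congrArg Prod.snd hq
        simpa using this
      linarith
    · rw [scaled_char k hkpos] at hk
      obtain ⟨h0', h1', h2'⟩ := hk
      simp only at h0' h1' h2'
      rcases Nat.lt_or_ge k 2 with hk2 | hk2
      · -- k = 1 : forces a = 0
        interval_cases k
        norm_num at h1' h2'
        have hx0 : (a.1 : ℝ) = 0 := by linarith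
        have hy0 : (a.2 : ℝ) = 0 := by linarith
        left
        have : a.1 = 0 := by exact_mod_cast hx0
        have : a.2 = 0 := by exact_mod_cast hy0
        ext <;> simp_all
      · right
        refine ⟨k - 1, ?_⟩
        rw [scaled_char (k - 1) (by omega)]
        have hcast : ((k - 1 : ℕ) : ℝ) = (k : ℝ) - 1 := by
          push_cast [Nat.cast_sub (by omega : 1 ≤ k)]; ring
        rw [hcast]
        refine ⟨by simp [toR]; exact_mod_cast hnat.2, ?_, ?_⟩ <;> simp [toR] <;> linarith
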